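/- Fix n ≥ 1, u ∈ ℕ, q₀ ∈ {0,…,n}, p ∈ [0,1]. Let γ_1,…,γ_u be i.i.d. uniform on [n], S ⊆ [n] with |S| = q₀, Q = #{i ∈ S : no γ_j equals i}, A = #{i ∈ [n] : some γ_j equals i}, and let κ̃_1,…,κ̃_n be i.i.d. Bernoulli(p) independent of the γ's, with J = Σ_{i : some γ_j = i} κ̃_i. Then E[q₀ − Q + u − A + J] = n·(q₀/n − (1−p))·(1 − (1−1/n)^u) + u. -/

import Mathlib

open MeasureTheory ProbabilityTheory Finset

theorem expected_single_loop_outflux {Ω : Type*} [MeasurableSpace Ω]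
    (μ : Measure Ω) [IsProbabilityMeasure μ]
    (n u : ℕ) (hn : 1 ≤ n) (q₀ : ℕ) (hq₀ : q₀ ≤ n) (p : ℝ) (hp : 0 ≤ p ∧ p ≤ 1)
    (γ : Fin u → Ω → Fin n) (κ : Fin n → Ω → Bool)
    (hγmeas : ∀ j, Measurable (γ j)) (hκmeas : ∀ i, Measurable (κ i))
    (hindep : iIndepFun (β := fun k : Fin u ⊕ Fin n => Sum.elim (fun _ => Fin n) (fun _ => Bool) k)
      (m := fun k => Sum.rec
        (motive := fun k => MeasurableSpace (Sum.elim (fun _ => Fin n) (fun _ => Bool) k))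
        (fun _ => (inferInstance : MeasurableSpace (Fin n)))
        (fun _ => (inferInstance : MeasurableSpace Bool)) k)
      (fun k => Sum.rec
        (motive := fun k => Ω → Sum.elim (fun _ => Fin n) (fun _ => Bool) k)
        (fun j => γ j) (fun i => κ i) k) μ)
    (hunif : ∀ j i, μ {ω | γ j ω = i} = (n : ENNReal)⁻¹)
    (hbern : ∀ i, μ {ω | κ i ω = true} = ENNReal.ofReal p)
    (S : Finset (Fin n)) (hS : S.card = q₀)
    (Q : Ω → ℕ) (hQ : ∀ ω, Q ω = (S.filter fun i => ∀ j, γ j ω ≠ i).card)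
    (A : Ω → ℕ) (hA : ∀ ω, A ω = (univ.filter fun i : Fin n => ∃ j, γ j ω = i).card)
    (J : Ω → ℕ)
    (hJ : ∀ ω, J ω =
      ∑ i ∈ univ.filter (fun i : Fin n => ∃ j, γ j ω = i), (if κ i ω then 1 else 0)) :
    ∫ ω, ((q₀ : ℝ) - Q ω + u - A ω + J ω) ∂μ
      = n * ((q₀ : ℝ) / n - (1 - p)) * (1 - (1 - 1 / n) ^ u) + u := by
  classical
  obtain ⟨hp0, hp1⟩ := hp
  have hn0 : (n : ℝ) ≠ 0 := by positivity
  set F := (fun k => Sum.rec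
        (motive := fun k => Ω → Sum.elim (fun _ => Fin n) (fun _ => Bool) k)
        (fun j => γ j) (fun i => κ i) k) with hF
  set B : Fin n → Set Ω := fun i => {ω | ∃ j, γ j ω = i} with hBdef
  set C : Fin n → Set Ω := fun i => {ω | ∀ j, γ j ω ≠ i} with hCdef
  set K : Fin n → Set Ω := fun i => {ω | κ i ω = true} with hKdef
  have hBC : ∀ i, B i = (C i)ᶜ := by
    intro i; ext ω; simp [B, C]
  have hCmeas : ∀ i, MeasurableSet (C i) := by
    intro i
    have : C i = ⋂ j, (γ j) ⁻¹' {i}ᶜ := by ext ω; simp [C]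
    rw [this]
    exact MeasurableSet.iInter fun j => (hγmeas j) (measurableSet_singleton i).compl
  have hBmeas : ∀ i, MeasurableSet (B i) := fun i => (hBC i) ▸ (hCmeas i).compl
  have hKmeas : ∀ i, MeasurableSet (K i) := fun i =>
    (hκmeas i) (measurableSet_singleton true)
  have hγne : ∀ (j : Fin u) (i : Fin n), μ ((γ j) ⁻¹' {i}ᶜ) = 1 - (n : ENNReal)⁻¹ := by
    intro j i
    have h1 : (γ j) ⁻¹' {i}ᶜ = {ω | γ j ω = i}ᶜ := by ext ω; simp
    have hm : MeasurableSet {ω | γ j ω = i} := (hγmeas j) (measurableSet_singleton i)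
    rw [h1, measure_compl hm (measure_ne_top μ _), hunif j i, measure_univ]
  have key := hindep.measure_inter_preimage_eq_mul
  -- measure of C i
  have hC : ∀ i, μ (C i) = (1 - (n : ENNReal)⁻¹) ^ u := by
    intro i
    have hk := key (Finset.univ.image Sum.inl)
      (sets := Sum.rec (fun _ => ({i}ᶜ : Set (Fin n))) (fun _ => (Set.univ : Set Bool)))
      (by rintro (j | i') _
          · exact (measurableSet_singleton i).compl
          · exact MeasurableSet.univ)
    have hset : (⋂ k ∈ Finset.univ.image Sum.inl,
        F k ⁻¹' (Sum.rec (fun _ => ({i}ᶜ : Set (Fin n))) (fun _ => (Set.univ : Set Bool)) k))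
        = C i := by
      ext ω; simp [C, F]
    rw [hset] at hk
    rw [hk, Finset.prod_image (fun a _ b _ h => Sum.inl_injective h)]
    simp only [F]
    refine (Finset.prod_congr rfl (fun j _ => hγne j i)).trans ?_
    rw [Finset.prod_const, Finset.card_univ,
      Fintype.card_fin]
  -- measure of C i ∩ K i
  have hCK : ∀ i, μ (C i ∩ K i) = (1 - (n : ENNReal)⁻¹) ^ u * ENNReal.ofReal p := by
    intro i
    have hnotmem : (Sum.inr i : Fin u ⊕ Fin n) ∉ Finset.univ.image Sum.inl := by simp
    have hk := key (insert (Sum.inr i) (Finset.univ.image Sum.inl))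
      (sets := Sum.rec (fun _ => ({i}ᶜ : Set (Fin n))) (fun _ => ({true} : Set Bool)))
      (by rintro (j | i') _
          · exact (measurableSet_singleton i).compl
          · exact measurableSet_singleton true)
    have hset : (⋂ k ∈ insert (Sum.inr i) (Finset.univ.image Sum.inl),
        F k ⁻¹' (Sum.rec (fun _ => ({i}ᶜ : Set (Fin n))) (fun _ => ({true} : Set Bool)) k))
        = C i ∩ K i := by
      ext ω; simp [C, K, F, and_comm]
    rw [hset] at hk
    rw [hk, Finset.prod_insert hnotmem, Finset.prod_image (fun a _ b _ h => Sum.inl_injective h)]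
    simp only [F]
    have hκi : μ ((κ i) ⁻¹' {true}) = ENNReal.ofReal p := by
      have : (κ i) ⁻¹' {true} = {ω | κ i ω = true} := by ext ω; simp
      rw [this, hbern]
    refine (congrArg₂ (· * ·) hκi (Finset.prod_congr rfl (fun j _ => hγne j i))).trans ?_
    rw [Finset.prod_const, Finset.card_univ,
      Fintype.card_fin, mul_comm]
  -- real versions
  set c : ℝ := (1 - 1 / (n : ℝ)) ^ u with hcdef
  have hinv_le : (n : ENNReal)⁻¹ ≤ 1 := by
    rw [ENNReal.inv_le_one]
    exact_mod_cast hn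
  have htr : ((1 - (n : ENNReal)⁻¹) ^ u).toReal = c := by
    rw [ENNReal.toReal_pow, ENNReal.toReal_sub_of_le hinv_le (by simp)]
    simp [ENNReal.toReal_inv, hcdef, one_div]
  have hCr : ∀ i, (μ (C i)).toReal = c := fun i => by rw [hC i, htr]
  have hBr : ∀ i, (μ (B i)).toReal = 1 - c := by
    intro i
    rw [hBC i, measure_compl (hCmeas i) (measure_ne_top μ _), measure_univ,
      ENNReal.toReal_sub_of_le (prob_le_one) (by simp), ENNReal.toReal_one, hCr i]
  have hBKr : ∀ i, (μ (B i ∩ K i)).toReal = p * (1 - c) := by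
    intro i
    have hsplit : μ (K i) = μ (B i ∩ K i) + μ (C i ∩ K i) := by
      rw [← measure_union
        (by
          apply Set.disjoint_of_subset Set.inter_subset_left Set.inter_subset_left
          rw [hBC i]
          exact disjoint_compl_left)
        ((hCmeas i).inter (hKmeas i))]
      congr 1
      rw [hBC i]
      ext ω
      by_cases h : ω ∈ C i <;> simp [h]
    have hKi : μ (K i) = ENNReal.ofReal p := hbern i
    have := congrArg ENNReal.toReal hsplit
    rw [hKi, ENNReal.toReal_ofReal hp0,
      ENNReal.toReal_add (measure_ne_top μ _) (measure_ne_top μ _), hCK i,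
      ENNReal.toReal_mul, htr, ENNReal.toReal_ofReal hp0] at this
    linarith
  -- pointwise decomposition
  have hf : ∀ ω, ((q₀ : ℝ) - Q ω + u - A ω + J ω) =
      (u : ℝ) + (∑ i ∈ S, (B i).indicator (fun _ => (1 : ℝ)) ω)
        - (∑ i : Fin n, (B i).indicator (fun _ => (1 : ℝ)) ω)
        + (∑ i : Fin n, (B i ∩ K i).indicator (fun _ => (1 : ℝ)) ω) := by
    intro ω
    have hind : ∀ i, (B i).indicator (fun _ => (1 : ℝ)) ω =
        if (∃ j, γ j ω = i) then 1 else 0 := by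
      intro i
      simp only [Set.indicator_apply, hBdef, Set.mem_setOf_eq]
    have hindK : ∀ i, (B i ∩ K i).indicator (fun _ => (1 : ℝ)) ω =
        if (∃ j, γ j ω = i) then (if κ i ω then (1:ℝ) else 0) else 0 := by
      intro i
      simp only [Set.indicator_apply, Set.mem_inter_iff, hBdef, hKdef, Set.mem_setOf_eq]
      by_cases h : ∃ j, γ j ω = i <;> by_cases h2 : κ i ω = true <;> simp [h, h2]
    have hQ' : (q₀ : ℝ) - Q ω = ∑ i ∈ S, (B i).indicator (fun _ => (1 : ℝ)) ω := by
      have hcard0 := Finset.card_filter_add_card_filter_not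
        (s := S) (p := fun i => ∀ j, γ j ω ≠ i)
      have hfc : S.filter (fun i => ¬ ∀ j, γ j ω ≠ i) = S.filter (fun i => ∃ j, γ j ω = i) := by
        apply Finset.filter_congr
        intro i _
        push_neg
        simp
      rw [hfc, hS] at hcard0
      have hcard : ((S.filter fun i => ∀ j, γ j ω ≠ i).card : ℝ)
          + ((S.filter fun i => ∃ j, γ j ω = i).card : ℝ) = q₀ := by exact_mod_cast hcard0
      rw [hQ ω]
      simp only [hind, Finset.sum_boole]
      linarith
    have hA' : (A ω : ℝ) = ∑ i : Fin n, (B i).indicator (fun _ => (1 : ℝ)) ω := by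
      rw [hA ω]
      simp only [hind, Finset.sum_boole]
    have hJ' : (J ω : ℝ) = ∑ i : Fin n, (B i ∩ K i).indicator (fun _ => (1 : ℝ)) ω := by
      rw [hJ ω]
      simp only [hindK]
      rw [Finset.sum_filter]
      push_cast
      rfl
    linarith [hQ', hA', hJ']
  -- integrability
  have hint : ∀ (s : Set Ω), MeasurableSet s →
      Integrable (s.indicator (fun _ => (1 : ℝ))) μ := fun s hs =>
    (integrable_const (1 : ℝ)).indicator hs
  have hintS : Integrable (fun ω => ∑ i ∈ S, (B i).indicator (fun _ => (1 : ℝ)) ω) μ :=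
    integrable_finset_sum _ (fun i _ => hint _ (hBmeas i))
  have hintA : Integrable (fun ω => ∑ i : Fin n, (B i).indicator (fun _ => (1 : ℝ)) ω) μ :=
    integrable_finset_sum _ (fun i _ => hint _ (hBmeas i))
  have hintJ : Integrable (fun ω => ∑ i : Fin n, (B i ∩ K i).indicator (fun _ => (1 : ℝ)) ω) μ :=
    integrable_finset_sum _ (fun i _ => hint _ ((hBmeas i).inter (hKmeas i)))
  have hieq : ∫ ω, ((q₀ : ℝ) - Q ω + u - A ω + J ω) ∂μ =
      ∫ ω, ((u : ℝ) + (∑ i ∈ S, (B i).indicator (fun _ => (1 : ℝ)) ω)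
        - (∑ i : Fin n, (B i).indicator (fun _ => (1 : ℝ)) ω)
        + (∑ i : Fin n, (B i ∩ K i).indicator (fun _ => (1 : ℝ)) ω)) ∂μ :=
    integral_congr_ae (Filter.Eventually.of_forall hf)
  rw [hieq]
  have hint1 : Integrable (fun ω => ((u : ℕ) : ℝ)
      + (∑ i ∈ S, (B i).indicator (fun _ => (1 : ℝ)) ω)) μ :=
    (integrable_const _).add hintS
  have hint2 : Integrable (fun ω => ((u : ℕ) : ℝ)
      + (∑ i ∈ S, (B i).indicator (fun _ => (1 : ℝ)) ω)
      - (∑ i : Fin n, (B i).indicator (fun _ => (1 : ℝ)) ω)) μ := hint1.sub hintA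
  rw [integral_add hint2 hintJ, integral_sub hint1 hintA,
    integral_add (integrable_const ((u : ℕ) : ℝ)) hintS,
    integral_const, integral_finset_sum _ (fun i _ => hint _ (hBmeas i)),
    integral_finset_sum _ (fun i _ => hint _ (hBmeas i)),
    integral_finset_sum _ (fun i _ => hint _ ((hBmeas i).inter (hKmeas i)))]
  have hii : ∀ (s : Set Ω), MeasurableSet s →
      ∫ ω, s.indicator (fun _ => (1 : ℝ)) ω ∂μ = (μ s).toReal := by
    intro s hs
    rw [integral_indicator_const (1 : ℝ) hs, smul_eq_mul, mul_one]
    rfl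
  rw [Finset.sum_congr rfl (fun i _ => (hii _ (hBmeas i)).trans (hBr i)),
    Finset.sum_congr rfl (fun i _ => (hii _ (hBmeas i)).trans (hBr i)),
    Finset.sum_congr rfl (fun i _ => (hii _ ((hBmeas i).inter (hKmeas i))).trans (hBKr i)),
    Finset.sum_const, Finset.sum_const, Finset.sum_const, hS, Finset.card_univ,
    Fintype.card_fin]
  simp only [measure_univ, probReal_univ, ENNReal.toReal_one, smul_eq_mul, nsmul_eq_mul]
  field_simp
  ring
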